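/- arXiv:1302.6545 — 2 statements merged into one kernel-verified Lean document; each statement's English description precedes it below -/
import Mathlib

section
/- Let φ : [0, ∞) → ℝ be C² and suppose there exist constants C, C₀ > 0 such that |φ(t)| ≤ C(1+t)e^{-t} and φ''(t) ≤ C₀ for all t ≥ 0 (writing φ' for dφ/dt). Then for every η with 0 < η < 1/2 there exists a constant C' such that φ'(t) ≥ -C' e^{-η t} for all t ≥ 0. -/
/-- Lower-bound half of the exponential decay of `φ̇`: if `|φ(t)| ≤ C(1+t)e^{-t}`
and `φ'' ≤ C₀`, then for every `0 < η < 1/2` one has `φ' ≥ -C' e^{-ηt}`. -/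
theorem phidot_lower_decay
    (φ φ' φ'' : ℝ → ℝ) (C C₀ : ℝ) (hC : 0 < C) (hC₀ : 0 < C₀)
    (hd1 : ∀ t, 0 ≤ t → HasDerivAt φ (φ' t) t)
    (hd2 : ∀ t, 0 ≤ t → HasDerivAt φ' (φ'' t) t)
    (hφ : ∀ t, 0 ≤ t → |φ t| ≤ C * (1 + t) * Real.exp (-t))
    (hφ'' : ∀ t, 0 ≤ t → φ'' t ≤ C₀) :
    ∀ η : ℝ, 0 < η → η < 1 / 2 →
      ∃ C' : ℝ, ∀ t, 0 ≤ t → -C' * Real.exp (-η * t) ≤ φ' t := by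
  intro η hη1 hη2
  set ε : ℝ := 1 - 2 * η with hεdef
  have hεpos : 0 < ε := by simp only [hεdef]; linarith
  refine ⟨2 * C * (2 + 1 / ε) + C₀ / 2, ?_⟩
  intro t ht
  -- Step A: φ' s ≤ φ' t + C₀ (s - t) for 0 ≤ t ≤ s
  have stepA : ∀ s, t ≤ s → φ' s ≤ φ' t + C₀ * (s - t) := by
    have mono : MonotoneOn (fun s => C₀ * s - φ' s) (Set.Ici (0:ℝ)) := by
      apply monotoneOn_of_hasDerivWithinAt_nonneg (f' := fun s => C₀ - φ'' s)
        (convex_Ici 0)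
      · intro s hs
        exact (continuousWithinAt_const.mul continuousWithinAt_id).sub
          ((hd2 s hs).continuousAt.continuousWithinAt)
      · intro x hx
        rw [interior_Ici] at hx
        have hD : HasDerivAt (fun s => C₀ * s - φ' s) (C₀ * 1 - φ'' x) x :=
          ((hasDerivAt_id x).const_mul C₀).sub (hd2 x hx.le)
        simpa using hD.hasDerivWithinAt
      · intro x hx
        rw [interior_Ici] at hx
        have := hφ'' x hx.le
        linarith
    intro s hs
    have := mono (Set.mem_Ici.2 ht) (Set.mem_Ici.2 (ht.trans hs)) hs
    simp only at this
    linarith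
  -- Step B: φ (t+γ) - φ t ≤ φ' t * γ + C₀ γ²/2 for γ ≥ 0
  have stepB : ∀ γ : ℝ, 0 ≤ γ →
      φ (t + γ) - φ t ≤ φ' t * γ + C₀ * γ ^ 2 / 2 := by
    intro γ hγ
    have anti : AntitoneOn
        (fun s => φ s - (φ' t - C₀ * t) * s - C₀ * s ^ 2 / 2) (Set.Ici t) := by
      apply antitoneOn_of_hasDerivWithinAt_nonpos
        (f' := fun s => φ' s - (φ' t - C₀ * t) - C₀ * s) (convex_Ici t)
      · intro s hs
        have hs0 : (0:ℝ) ≤ s := ht.trans hs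
        exact (((hd1 s hs0).continuousAt.continuousWithinAt).sub
          (continuousWithinAt_const.mul continuousWithinAt_id)).sub
          ((continuousWithinAt_const.mul (continuousWithinAt_id.pow 2)).div_const 2)
      · intro x hx
        rw [interior_Ici] at hx
        have hx0 : (0:ℝ) ≤ x := ht.trans hx.le
        have hD : HasDerivAt
            (fun s => φ s - (φ' t - C₀ * t) * s - C₀ * s ^ 2 / 2)
            (φ' x - (φ' t - C₀ * t) * 1 - C₀ * (2 * x ^ 1) / 2) x :=
          ((hd1 x hx0).sub ((hasDerivAt_id x).const_mul (φ' t - C₀ * t))).sub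
            (((hasDerivAt_pow 2 x).const_mul C₀).div_const 2)
        have : (φ' x - (φ' t - C₀ * t) * 1 - C₀ * (2 * x ^ 1) / 2)
            = φ' x - (φ' t - C₀ * t) - C₀ * x := by ring
        rw [this] at hD
        exact hD.hasDerivWithinAt
      · intro x hx
        rw [interior_Ici] at hx
        have := stepA x hx.le
        linarith
    have := anti (Set.mem_Ici.2 le_rfl) (Set.mem_Ici.2 (by linarith : t ≤ t + γ))
      (by linarith : t ≤ t + γ)
    simp only at this
    nlinarith [this]
  -- Now apply with γ = exp(-η t)
  set γ : ℝ := Real.exp (-η * t) with hγdef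
  have hγpos : 0 < γ := Real.exp_pos _
  have hγle1 : γ ≤ 1 := Real.exp_le_one_iff.2 (by nlinarith)
  have key := stepB γ hγpos.le
  -- bounds on φ
  have hb1 := hφ t ht
  have hb2 := hφ (t + γ) (by linarith)
  have hE : Real.exp (-(t + γ)) ≤ Real.exp (-t) :=
    Real.exp_le_exp.2 (by linarith)
  -- exp(-t) = exp(-ε t) * γ²
  have hsplit : Real.exp (-t) = Real.exp (-ε * t) * γ ^ 2 := by
    rw [hγdef, pow_two, ← Real.exp_add, ← Real.exp_add]
    congr 1
    simp only [hεdef]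
    ring
  have hEpos : 0 < Real.exp (-t) := Real.exp_pos _
  have hE'pos : 0 < Real.exp (-(t + γ)) := Real.exp_pos _
  have h1 : φ t ≤ C * (1 + t) * Real.exp (-t) := (abs_le.1 hb1).2
  have h2 : -(C * (1 + (t + γ)) * Real.exp (-(t + γ))) ≤ φ (t + γ) :=
    neg_le_of_abs_le hb2
  have h3 : C * (1 + (t + γ)) * Real.exp (-(t + γ)) ≤ C * (2 + t) * Real.exp (-t) := by
    have hle : (1 + (t + γ)) * Real.exp (-(t + γ)) ≤ (2 + t) * Real.exp (-t) := by
      nlinarith [mul_nonneg (by linarith : (0:ℝ) ≤ 1 + t + γ)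
        (sub_nonneg.2 hE), mul_nonneg (sub_nonneg.2 hγle1) (Real.exp_pos (-t)).le]
    calc C * (1 + (t + γ)) * Real.exp (-(t + γ))
        = C * ((1 + (t + γ)) * Real.exp (-(t + γ))) := by ring
      _ ≤ C * ((2 + t) * Real.exp (-t)) := by
          exact mul_le_mul_of_nonneg_left hle hC.le
      _ = C * (2 + t) * Real.exp (-t) := by ring
  have h1' : C * (1 + t) * Real.exp (-t) ≤ C * (2 + t) * Real.exp (-t) := by
    nlinarith [hEpos]
  have hA : -(2 * C * (2 + t) * Real.exp (-t)) - C₀ * γ ^ 2 / 2 ≤ φ' t * γ := by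
    linarith
  -- (2+t) * exp(-ε t) ≤ 2 + 1/ε
  have hexpe := Real.add_one_le_exp (ε * t)
  have hinv : Real.exp (-ε * t) * Real.exp (ε * t) = 1 := by
    rw [← Real.exp_add]; simp
  have hppos : 0 < Real.exp (ε * t) := Real.exp_pos _
  have hnpos : 0 < Real.exp (-ε * t) := Real.exp_pos _
  have h1ε : ε * (1 / ε) = 1 := mul_one_div_cancel hεpos.ne'
  have hstep : (2 + t) ≤ (2 + 1 / ε) * Real.exp (ε * t) := by
    have hfac : (2 + t) ≤ (2 + 1 / ε) * (ε * t + 1) := by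
      nlinarith [mul_nonneg hεpos.le ht, one_div_pos.2 hεpos]
    have : (2 + 1 / ε) * (ε * t + 1) ≤ (2 + 1 / ε) * Real.exp (ε * t) :=
      mul_le_mul_of_nonneg_left hexpe
        (by positivity)
    linarith
  have hbound : (2 + t) * Real.exp (-ε * t) ≤ 2 + 1 / ε := by
    have := mul_le_mul_of_nonneg_right hstep hnpos.le
    calc (2 + t) * Real.exp (-ε * t) ≤
        (2 + 1 / ε) * Real.exp (ε * t) * Real.exp (-ε * t) := this
      _ = (2 + 1 / ε) * (Real.exp (-ε * t) * Real.exp (ε * t)) := by ring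
      _ = 2 + 1 / ε := by rw [hinv, mul_one]
  -- combine
  have hγsq : 0 ≤ γ ^ 2 := sq_nonneg γ
  have hfin : -(2 * C * (2 + 1 / ε) + C₀ / 2) * γ * γ ≤ φ' t * γ := by
    have h4 : 2 * C * (2 + t) * Real.exp (-t) = 2 * C * ((2 + t) * Real.exp (-ε * t)) * γ ^ 2 := by
      rw [hsplit]; ring
    have h5 : 2 * C * ((2 + t) * Real.exp (-ε * t)) * γ ^ 2 ≤
        2 * C * (2 + 1 / ε) * γ ^ 2 := by
      have := mul_le_mul_of_nonneg_left hbound (by positivity : (0:ℝ) ≤ 2 * C)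
      exact mul_le_mul_of_nonneg_right this hγsq
    have h6 : -(2 * C * (2 + 1 / ε) + C₀ / 2) * γ * γ
        = -(2 * C * (2 + 1 / ε) * γ ^ 2) - C₀ * γ ^ 2 / 2 := by ring
    rw [h6]
    linarith [hA, h5, h4.le, h4.ge]
  have := (mul_le_mul_iff_of_pos_right hγpos).1 hfin
  linarith
end

section
/- Let φ : [0, ∞) → ℝ be C² with |φ(t)| ≤ C(1+t)e^{-t} for all t, and suppose φ''(t) ≥ -C₀ e^{t'/2} for all t' ≥ 0 and t ∈ [t', t'+1]. Then for every σ with 0 < σ < 1/4 there exists a constant C' such that φ'(t) ≤ C' e^{-σ t} for all t ≥ 0. -/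
set_option maxHeartbeats 1000000


/-- Upper-bound half of the exponential decay of `φ̇`: if `|φ(t)| ≤ C(1+t)e^{-t}`
and `φ'' ≥ -C₀ e^{t'/2}` on each interval `[t', t'+1]`, then for every
`0 < σ < 1/4` one has `φ' ≤ C' e^{-σt}`. -/
theorem phidot_upper_decay
    (φ φ' φ'' : ℝ → ℝ) (C C₀ : ℝ) (hC : 0 < C) (hC₀ : 0 < C₀)
    (hd1 : ∀ t, 0 ≤ t → HasDerivAt φ (φ' t) t)
    (hd2 : ∀ t, 0 ≤ t → HasDerivAt φ' (φ'' t) t)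
    (hφ : ∀ t, 0 ≤ t → |φ t| ≤ C * (1 + t) * Real.exp (-t))
    (hφ'' : ∀ t', 0 ≤ t' → ∀ t ∈ Set.Icc t' (t' + 1), -C₀ * Real.exp (t' / 2) ≤ φ'' t) :
    ∀ σ : ℝ, 0 < σ → σ < 1 / 4 →
      ∃ C' : ℝ, ∀ t, 0 ≤ t → φ' t ≤ C' * Real.exp (-σ * t) := by
  intro σ hσ hσ4
  set a : ℝ := 1 / 2 - 2 * σ with ha_def
  have ha : 0 < a := by simp only [ha_def]; linarith
  refine ⟨2 * C * (2 + 1 / a) + C₀ / 2, fun t ht => ?_⟩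
  set E : ℝ := Real.exp (t / 2) with hE_def
  have hE : 0 < E := Real.exp_pos _
  set δ : ℝ := Real.exp (-(σ + 1 / 2) * t) with hδ_def
  have hδ0 : 0 < δ := Real.exp_pos _
  have hδ1 : δ ≤ 1 := by
    rw [hδ_def, Real.exp_le_one_iff]
    nlinarith
  -- auxiliary functions
  set g' : ℝ → ℝ := fun s => φ' s - φ' t + C₀ * E * (s - t) with hg'_def
  set g : ℝ → ℝ := fun s => φ s - φ' t * (s - t) + C₀ * E * ((s - t) ^ 2 / 2) with hg_def
  have hpos : ∀ s ∈ Set.Icc t (t + 1), 0 ≤ s := fun s hs => le_trans ht hs.1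
  have hg'd : ∀ s, 0 ≤ s → HasDerivAt g' (φ'' s + C₀ * E) s := by
    intro s hs
    have h1 : HasDerivAt (fun s : ℝ => C₀ * E * (s - t)) (C₀ * E) s := by
      simpa using (((hasDerivAt_id s).sub_const t).const_mul (C₀ * E))
    exact (((hd2 s hs).sub_const (φ' t)).add h1)
  have hgd : ∀ s, 0 ≤ s → HasDerivAt g (g' s) s := by
    intro s hs
    have h1 : HasDerivAt (fun s : ℝ => φ' t * (s - t)) (φ' t) s := by
      simpa using (((hasDerivAt_id s).sub_const t).const_mul (φ' t))
    have h2 : HasDerivAt (fun s : ℝ => C₀ * E * ((s - t) ^ 2 / 2)) (C₀ * E * (s - t)) s := by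
      have : HasDerivAt (fun s : ℝ => (s - t) ^ 2 / 2) (s - t) s := by
        have := (((hasDerivAt_id s).sub_const t).pow 2).div_const 2
        simpa using this
      simpa using this.const_mul (C₀ * E)
    have := (((hd1 s hs).sub h1).add h2)
    exact this
  -- g' is monotone on Icc t (t+1), with g' t = 0, hence g' ≥ 0 there
  have hint : interior (Set.Icc t (t + 1)) = Set.Ioo t (t + 1) := interior_Icc
  have mono1 : MonotoneOn g' (Set.Icc t (t + 1)) := by
    refine monotoneOn_of_hasDerivWithinAt_nonneg (convex_Icc _ _)
      (fun s hs => (hg'd s (hpos s hs)).continuousAt.continuousWithinAt)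
      (f' := fun s => φ'' s + C₀ * E) (fun s hs => ?_) (fun s hs => ?_)
    · exact (hg'd s (hpos s (by rw [hint] at hs; exact Set.Ioo_subset_Icc_self hs))).hasDerivWithinAt
    · rw [hint] at hs
      have := hφ'' t ht s (Set.Ioo_subset_Icc_self hs)
      rw [← hE_def] at this
      show (0:ℝ) ≤ φ'' s + C₀ * E
      linarith
  have hg'nonneg : ∀ s ∈ Set.Icc t (t + 1), 0 ≤ g' s := by
    intro s hs
    have h0 : g' t = 0 := by simp [hg'_def]
    have := mono1 (Set.left_mem_Icc.2 (by linarith)) hs hs.1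
    linarith [h0 ▸ this]
  have mono2 : MonotoneOn g (Set.Icc t (t + 1)) := by
    refine monotoneOn_of_hasDerivWithinAt_nonneg (convex_Icc _ _)
      (fun s hs => (hgd s (hpos s hs)).continuousAt.continuousWithinAt)
      (f' := g') (fun s hs => ?_) (fun s hs => ?_)
    · exact (hgd s (hpos s (by rw [hint] at hs; exact Set.Ioo_subset_Icc_self hs))).hasDerivWithinAt
    · rw [hint] at hs
      exact hg'nonneg s (Set.Ioo_subset_Icc_self hs)
  -- key inequality
  have hmem : t + δ ∈ Set.Icc t (t + 1) := ⟨by linarith, by linarith⟩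
  have hkey : g t ≤ g (t + δ) :=
    mono2 (Set.left_mem_Icc.2 (by linarith)) hmem (by linarith)
  have hkey' : φ' t * δ ≤ φ (t + δ) - φ t + C₀ * E * (δ ^ 2 / 2) := by
    simp only [hg_def] at hkey
    have : t + δ - t = δ := by ring
    rw [this] at hkey
    simp at hkey
    linarith
  -- bound φ values
  have hb1 : φ (t + δ) ≤ C * (2 + t) * Real.exp (-t) := by
    have h := hφ (t + δ) (by linarith)
    have h1 : φ (t + δ) ≤ C * (1 + (t + δ)) * Real.exp (-(t + δ)) :=
      le_trans (le_abs_self _) h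
    have h2 : Real.exp (-(t + δ)) ≤ Real.exp (-t) := Real.exp_le_exp.2 (by linarith)
    calc φ (t + δ) ≤ C * (1 + (t + δ)) * Real.exp (-(t + δ)) := h1
      _ ≤ C * (2 + t) * Real.exp (-(t + δ)) := by
          apply mul_le_mul_of_nonneg_right _ (Real.exp_pos _).le
          nlinarith
      _ ≤ C * (2 + t) * Real.exp (-t) := by
          apply mul_le_mul_of_nonneg_left h2; nlinarith
  have hb2 : -φ t ≤ C * (2 + t) * Real.exp (-t) := by
    have h := hφ t ht
    have := neg_abs_le (φ t)
    nlinarith [Real.exp_pos (-t)]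
  have hmain : φ' t * δ ≤ 2 * C * (2 + t) * Real.exp (-t) + C₀ * E * (δ ^ 2 / 2) := by
    linarith
  -- exponential identities
  have hid1 : E * δ ^ 2 = Real.exp (-σ * t) * δ := by
    rw [hE_def, hδ_def, sq, ← Real.exp_add, ← Real.exp_add, ← Real.exp_add]
    congr 1
    ring
  have hid2 : Real.exp (-t) = Real.exp (-a * t) * (Real.exp (-σ * t) * δ) := by
    rw [hδ_def, ← Real.exp_add, ← Real.exp_add]
    congr 1
    simp only [ha_def]; ring
  -- (2 + t) * exp (-a t) ≤ 2 + 1/a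
  have hfinal : (2 + t) * Real.exp (-a * t) ≤ 2 + 1 / a := by
    have h1 : Real.exp (-a * t) ≤ 1 := by
      rw [Real.exp_le_one_iff]; nlinarith
    have h2 : a * t ≤ Real.exp (a * t) := by
      nlinarith [Real.add_one_le_exp (a * t)]
    have h3 : t * Real.exp (-a * t) ≤ 1 / a := by
      have hxe : Real.exp (a * t) * Real.exp (-a * t) = 1 := by
        rw [← Real.exp_add]; simp
      have h4 := mul_le_mul_of_nonneg_right h2 (Real.exp_pos (-a * t)).le
      rw [le_div_iff₀ ha]
      nlinarith
    nlinarith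
  -- put it together: divide hmain by δ
  rw [← mul_le_mul_iff_of_pos_right hδ0]
  calc φ' t * δ ≤ 2 * C * (2 + t) * Real.exp (-t) + C₀ * E * (δ ^ 2 / 2) := hmain
    _ = 2 * C * ((2 + t) * Real.exp (-a * t)) * (Real.exp (-σ * t) * δ)
        + C₀ / 2 * (Real.exp (-σ * t) * δ) := by
          rw [hid2]
          have : C₀ * E * (δ ^ 2 / 2) = C₀ / 2 * (E * δ ^ 2) := by ring
          rw [this, hid1]; ring
    _ ≤ 2 * C * (2 + 1 / a) * (Real.exp (-σ * t) * δ)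
        + C₀ / 2 * (Real.exp (-σ * t) * δ) := by
          have hp : 0 < Real.exp (-σ * t) * δ := mul_pos (Real.exp_pos _) hδ0
          have h5 := mul_le_mul_of_nonneg_right
            (mul_le_mul_of_nonneg_left hfinal (by positivity : (0:ℝ) ≤ 2 * C)) hp.le
          linarith
    _ = (2 * C * (2 + 1 / a) + C₀ / 2) * Real.exp (-σ * t) * δ := by ring
end
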